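/- Let Ω ⊂ ℝⁿ be bounded, b > 0, β > 0, γ := β/b. Suppose f : L²(Ω) → ℝ and u_γ ∈ U_ad := {v ∈ L²(Ω) : |v(x)| ≤ b a.e.} is a global minimizer of u ↦ f(u) + γ‖u‖_{L¹(Ω)} over U_ad, and u_γ(x) ∈ {-b, 0, b} for a.e. x. Then u_γ is a global minimizer of u ↦ f(u) + β‖u‖₀ over U_ad, where ‖u‖₀ := meas{x : u(x) ≠ 0}. -/

import Mathlib

open MeasureTheory Set

/-- The admissible set `U_ad = {u : |u(x)| ≤ b a.e. on Ω}` (of a.e.-measurable functions). -/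
def Uad {n : ℕ} (Ω : Set (Fin n → ℝ)) (b : ℝ) : Set ((Fin n → ℝ) → ℝ) :=
  {u | AEStronglyMeasurable u (volume.restrict Ω) ∧
       ∀ᵐ x ∂volume.restrict Ω, |u x| ≤ b}

lemma meas_rw {n : ℕ} (Ω : Set (Fin n → ℝ)) (hΩm : MeasurableSet Ω)
    (u : (Fin n → ℝ) → ℝ) :
    volume {x ∈ Ω | u x ≠ 0} = (volume.restrict Ω) {x | u x ≠ 0} := by
  rw [Measure.restrict_apply' hΩm]
  congr 1
  ext x; simp [and_comm]

lemma key_lemma {n : ℕ} (Ω : Set (Fin n → ℝ)) (hΩm : MeasurableSet Ω)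
    (hΩb : Bornology.IsBounded Ω) (b : ℝ) (hb : 0 < b)
    (u : (Fin n → ℝ) → ℝ) (hu : u ∈ Uad Ω b) :
    ∫ x in Ω, |u x| ≤ b * (volume {x ∈ Ω | u x ≠ 0}).toReal ∧
    ((∀ᵐ x ∂volume.restrict Ω, u x = -b ∨ u x = 0 ∨ u x = b) →
      ∫ x in Ω, |u x| = b * (volume {x ∈ Ω | u x ≠ 0}).toReal) := by
  set μ := volume.restrict Ω with hμ
  haveI : IsFiniteMeasure μ := ⟨by
    rw [hμ, Measure.restrict_apply_univ]; exact hΩb.measure_lt_top⟩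
  obtain ⟨hmeas, hbd⟩ := hu
  set g := hmeas.mk u with hg
  have hgm : Measurable g := hmeas.measurable_mk
  have hae : u =ᵐ[μ] g := hmeas.ae_eq_mk
  have hgb : ∀ᵐ x ∂μ, |g x| ≤ b := by
    filter_upwards [hbd, hae] with x h1 h2; rw [← h2]; exact h1
  have hs : MeasurableSet {x | g x ≠ 0} :=
    (hgm (measurableSet_singleton 0)).compl
  have hmeq : volume {x ∈ Ω | u x ≠ 0} = μ {x | g x ≠ 0} := by
    rw [meas_rw Ω hΩm]
    refine measure_congr ?_
    filter_upwards [hae] with x hx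
    show (u x ≠ 0) = (g x ≠ 0)
    rw [hx]
  have h1 : ∫ x in Ω, |u x| = ∫ x, |g x| ∂μ :=
    integral_congr_ae (by filter_upwards [hae] with x hx; rw [hx])
  have hind : ∫ x, ({x | g x ≠ 0}).indicator (fun _ => b) x ∂μ
      = b * (μ {x | g x ≠ 0}).toReal := by
    rw [integral_indicator hs, setIntegral_const, smul_eq_mul, mul_comm]; rfl
  have hgint : Integrable (fun x => |g x|) μ :=
    (integrable_const b).mono' hgm.norm.aestronglyMeasurable
      (by filter_upwards [hgb] with x hx; simpa using hx)
  have hiint : Integrable (({x | g x ≠ 0}).indicator (fun _ => b)) μ :=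
    (integrable_const b).indicator hs
  constructor
  · rw [h1, hmeq, ← hind]
    apply integral_mono_ae hgint hiint
    filter_upwards [hgb] with x hx
    by_cases h : g x = 0
    · simp [Set.indicator, h]
    · rw [Set.indicator_of_mem (mem_setOf_eq ▸ h : x ∈ {x | g x ≠ 0})]; exact hx
  · intro hvals
    rw [h1, hmeq, ← hind]
    apply integral_congr_ae
    filter_upwards [hvals, hae] with x hx h2
    rw [h2] at hx
    rcases hx with h | h | h
    · rw [Set.indicator_of_mem (show x ∈ {x | g x ≠ 0} by simp [h]; linarith)]
      rw [h, abs_neg, abs_of_pos hb]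
    · simp [Set.indicator, h]
    · rw [Set.indicator_of_mem (show x ∈ {x | g x ≠ 0} by simp [h]; linarith), h, abs_of_pos hb]


/-- If `u_γ` globally minimizes `u ↦ f(u) + γ‖u‖_{L¹}` over `U_ad` with `γ = β/b`, and
`u_γ` takes only the values `-b, 0, b` a.e., then `u_γ` globally minimizes
`u ↦ f(u) + β‖u‖₀` over `U_ad`. -/
theorem L1_solution_solves_L0 {n : ℕ} (Ω : Set (Fin n → ℝ))
    (hΩm : MeasurableSet Ω) (hΩb : Bornology.IsBounded Ω)
    (b β : ℝ) (hb : 0 < b) (hβ : 0 < β)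
    (f : ((Fin n → ℝ) → ℝ) → ℝ) (uγ : (Fin n → ℝ) → ℝ)
    (huγ : uγ ∈ Uad Ω b)
    (hvals : ∀ᵐ x ∂volume.restrict Ω, uγ x = -b ∨ uγ x = 0 ∨ uγ x = b)
    (hmin : ∀ u ∈ Uad Ω b,
      f uγ + (β / b) * ∫ x in Ω, |uγ x| ≤ f u + (β / b) * ∫ x in Ω, |u x|) :
    ∀ u ∈ Uad Ω b,
      f uγ + β * (volume {x ∈ Ω | uγ x ≠ 0}).toReal ≤
        f u + β * (volume {x ∈ Ω | u x ≠ 0}).toReal := by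
  intro u hu
  have hγ := (key_lemma Ω hΩm hΩb b hb uγ huγ).2 hvals
  have hu' := (key_lemma Ω hΩm hΩb b hb u hu).1
  have h := hmin u hu
  have hbne : b ≠ 0 := ne_of_gt hb
  have e1 : (β / b) * ∫ x in Ω, |uγ x| = β * (volume {x ∈ Ω | uγ x ≠ 0}).toReal := by
    rw [hγ]; field_simp
  have e2 : (β / b) * ∫ x in Ω, |u x| ≤ β * (volume {x ∈ Ω | u x ≠ 0}).toReal := by
    calc (β / b) * ∫ x in Ω, |u x| ≤ (β / b) * (b * (volume {x ∈ Ω | u x ≠ 0}).toReal) := by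
          apply mul_le_mul_of_nonneg_left hu' (by positivity)
      _ = β * (volume {x ∈ Ω | u x ≠ 0}).toReal := by field_simp
  linarith [e1 ▸ h]
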